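/- Let E be a finite-dimensional complex inner product space, let H₁ and H₂ be self-adjoint operators on E with H₂ positive semi-definite, let η ∈ E be a unit vector with H₁ η = 0, and let Δ > 0 be such that ⟨x, H₁ x⟩ ≥ Δ‖x‖² for every vector x orthogonal to η. Set H := H₁ + H₂ and assume ⟨η, H η⟩ ≤ 1. Then every unit eigenvector φ of H corresponding to the smallest eigenvalue of H satisfies |⟨φ, η⟩|² ≥ 1 − 1/Δ. -/

import Mathlib

/-- The history state `η` (the unique null vector of the gap-amplified part `H₁`,
with energy penalty `Δ` on its orthogonal complement) has fidelity at least
`1 − 1/Δ` with any ground state `φ` of `H = H₁ + H₂`. -/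
theorem history_state_fidelity
    {E : Type*} [NormedAddCommGroup E] [InnerProductSpace ℂ E] [FiniteDimensional ℂ E]
    (H₁ H₂ : E →L[ℂ] E) (h₁ : IsSelfAdjoint H₁) (h₂ : IsSelfAdjoint H₂)
    (hpsd : ∀ x : E, 0 ≤ (inner ℂ x (H₂ x) : ℂ).re)
    (η : E) (hη : ‖η‖ = 1) (hker : H₁ η = 0)
    (Δ : ℝ) (hΔ : 0 < Δ)
    (hgap : ∀ x : E, (inner ℂ η x : ℂ) = 0 → Δ * ‖x‖ ^ 2 ≤ (inner ℂ x (H₁ x) : ℂ).re)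
    (hE : ((inner ℂ η ((H₁ + H₂) η) : ℂ)).re ≤ 1)
    (φ : E) (hφ : ‖φ‖ = 1) (μ : ℝ) (heig : (H₁ + H₂) φ = (μ : ℂ) • φ)
    (hmin : ∀ (ν : ℝ) (x : E), x ≠ 0 → (H₁ + H₂) x = (ν : ℂ) • x → μ ≤ ν) :
    1 - 1 / Δ ≤ ‖(inner ℂ φ η : ℂ)‖ ^ 2 := by
  set T : E →L[ℂ] E := H₁ + H₂ with hT
  have hηne : η ≠ 0 := by
    intro h; rw [h, norm_zero] at hη; norm_num at hη
  have : Nontrivial E := ⟨η, 0, hηne⟩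
  have hsa : IsSelfAdjoint T := h₁.add h₂
  have hsym : (T : E →ₗ[ℂ] E).IsSymmetric := hsa.isSymmetric
  -- Step 1: μ ≤ 1
  have hμ1 : μ ≤ 1 := by
    set r : ℝ := ⨅ x : { x : E // x ≠ 0 },
        RCLike.re (inner ℂ ((T : E →ₗ[ℂ] E) (x : E)) (x : E) : ℂ) / ‖(x : E)‖ ^ 2 with hr
    obtain ⟨v, hv⟩ := hsym.hasEigenvalue_iInf_of_finiteDimensional.exists_hasEigenvector
    have hμr : μ ≤ r := hmin r v hv.2 (by exact hv.apply_eq_smul)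
    have hbdd : BddBelow (Set.range fun x : { x : E // x ≠ 0 } =>
        RCLike.re (inner ℂ ((T : E →ₗ[ℂ] E) (x : E)) (x : E) : ℂ) / ‖(x : E)‖ ^ 2) := by
      refine ⟨-‖T‖, ?_⟩
      rintro _ ⟨x, rfl⟩
      have hx0 : (0 : ℝ) < ‖(x : E)‖ ^ 2 := by
        have : ‖(x : E)‖ ≠ 0 := norm_ne_zero_iff.mpr x.2
        positivity
      rw [le_div_iff₀ hx0]
      have h1 : |(inner ℂ (T (x : E)) (x : E) : ℂ).re|
          ≤ ‖(inner ℂ (T (x : E)) (x : E) : ℂ)‖ := Complex.abs_re_le_norm _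
      have h2 : ‖(inner ℂ (T (x : E)) (x : E) : ℂ)‖ ≤ ‖T (x : E)‖ * ‖(x : E)‖ :=
        norm_inner_le_norm _ _
      have h3 : ‖T (x : E)‖ * ‖(x : E)‖ ≤ (‖T‖ * ‖(x : E)‖) * ‖(x : E)‖ :=
        mul_le_mul_of_nonneg_right (T.le_opNorm _) (norm_nonneg _)
      have h4 := neg_abs_le (inner ℂ (T (x : E)) (x : E) : ℂ).re
      simp only [ContinuousLinearMap.coe_coe, RCLike.re_to_complex]
      nlinarith
    have hrη : r ≤ RCLike.re (inner ℂ ((T : E →ₗ[ℂ] E) η) η : ℂ) / ‖η‖ ^ 2 :=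
      ciInf_le hbdd ⟨η, hηne⟩
    have hre : (inner ℂ (T η) η : ℂ).re = (inner ℂ η (T η) : ℂ).re :=
      inner_re_symm (𝕜 := ℂ) _ _
    calc μ ≤ r := hμr
      _ ≤ RCLike.re (inner ℂ ((T : E →ₗ[ℂ] E) η) η : ℂ) / ‖η‖ ^ 2 := hrη
      _ ≤ 1 := by
          simp only [ContinuousLinearMap.coe_coe, RCLike.re_to_complex, hη,
            one_pow, div_one, hre]
          exact hE
  -- Step 2: Rayleigh quotient of φ equals μ, and ⟪φ, H₁ φ⟫.re ≤ μ
  have hray : (inner ℂ φ (T φ) : ℂ).re = μ := by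
    rw [heig, inner_smul_right]
    have : (inner ℂ φ φ : ℂ) = (1 : ℂ) := by
      rw [inner_self_eq_norm_sq_to_K, hφ]; norm_num
    rw [this]; simp
  have hsplitT : (inner ℂ φ (T φ) : ℂ).re = (inner ℂ φ (H₁ φ) : ℂ).re
      + (inner ℂ φ (H₂ φ) : ℂ).re := by
    simp [hT, inner_add_right]
  have hH1le : (inner ℂ φ (H₁ φ) : ℂ).re ≤ μ := by
    have := hpsd φ
    linarith [hray, hsplitT]
  -- Step 3: orthogonal decomposition φ = c • η + x
  set c : ℂ := inner ℂ η φ with hc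
  set x : E := φ - c • η with hxdef
  have hox : (inner ℂ η x : ℂ) = 0 := by
    rw [hxdef, inner_sub_right, inner_smul_right]
    have : (inner ℂ η η : ℂ) = (1 : ℂ) := by
      rw [inner_self_eq_norm_sq_to_K, hη]; norm_num
    rw [this]; simp [hc]
  have hφeq : φ = c • η + x := by rw [hxdef]; abel
  -- ⟪φ, H₁ φ⟫ = ⟪x, H₁ x⟫
  have hH1x : (inner ℂ φ (H₁ φ) : ℂ) = (inner ℂ x (H₁ x) : ℂ) := by
    have hH1φ : H₁ φ = H₁ x := by
      rw [hφeq]; simp [hker]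
    rw [hH1φ, hφeq, inner_add_left, inner_smul_left]
    have : (inner ℂ η (H₁ x) : ℂ) = 0 := by
      have h5 := h₁.isSymmetric η x
      simp only [ContinuousLinearMap.coe_coe] at h5
      rw [← h5, hker, inner_zero_left]
    rw [this, mul_zero, zero_add]
  -- gap bound: Δ ‖x‖² ≤ μ ≤ 1
  have hgapx : Δ * ‖x‖ ^ 2 ≤ 1 := by
    have := hgap x hox
    rw [← hH1x] at this
    linarith
  have hx2 : ‖x‖ ^ 2 ≤ 1 / Δ := by
    rw [le_div_iff₀ hΔ]; linarith
  -- Pythagoras: 1 = ‖c‖² + ‖x‖²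
  have hpyth : 1 = ‖c‖ ^ 2 + ‖x‖ ^ 2 := by
    have horth : (inner ℂ (c • η) x : ℂ) = 0 := by
      rw [inner_smul_left, hox, mul_zero]
    have := norm_add_sq (𝕜 := ℂ) (c • η) x
    rw [← hφeq, horth] at this
    simp only [map_zero, mul_zero, add_zero] at this
    rw [hφ, norm_smul, hη, mul_one] at this
    simpa using this
  -- conclude
  have hfin : ‖(inner ℂ φ η : ℂ)‖ = ‖c‖ := by
    exact norm_inner_symm (𝕜 := ℂ) φ η
  rw [hfin]
  have h1Δ : 0 < 1 / Δ := by positivity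
  nlinarith
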